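/- Let C be an integral cubic form in r variables such that C, viewed over Q_p, has a non-singular zero x₀ ∈ Z_p^r (i.e., C(x₀) = 0 and ∂C/∂x_i(x₀) ≠ 0 for some i). Then R(C) = { C(x)/C(y) : x, y ∈ Z^r, C(y) ≠ 0 } is dense in Q_p. -/

import Mathlib

open MvPolynomial Polynomial

variable {p : ℕ} [Fact p.Prime]

noncomputable def lineG {r : ℕ} (x₀ : Fin r → ℤ_[p]) (i : Fin r) (φ : MvPolynomial (Fin r) ℤ_[p]) :
    Polynomial ℤ_[p] :=
  MvPolynomial.aeval (fun j => if j = i then Polynomial.X else Polynomial.C (x₀ j)) φ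

lemma lineG_eval {r : ℕ} (x₀ : Fin r → ℤ_[p]) (i : Fin r) (φ : MvPolynomial (Fin r) ℤ_[p])
    (t : ℤ_[p]) :
    (lineG x₀ i φ).eval t = MvPolynomial.eval (fun j => if j = i then t else x₀ j) φ := by
  induction φ using MvPolynomial.induction_on with
  | C a => simp [lineG]
  | add f g hf hg => simp [lineG, map_add] at hf hg ⊢; rw [hf, hg]
  | mul_X f j hf =>
    simp only [lineG, map_mul, MvPolynomial.aeval_X, Polynomial.eval_mul,
      MvPolynomial.eval_mul, MvPolynomial.eval_X] at hf ⊢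
    rw [hf]
    by_cases h : j = i <;> simp [h]

lemma lineG_deriv {r : ℕ} (x₀ : Fin r → ℤ_[p]) (i : Fin r) (φ : MvPolynomial (Fin r) ℤ_[p]) :
    Polynomial.derivative (lineG x₀ i φ) = lineG x₀ i (MvPolynomial.pderiv i φ) := by
  induction φ using MvPolynomial.induction_on with
  | C a => simp [lineG]
  | add f g hf hg => simp [lineG, map_add] at hf hg ⊢; rw [hf, hg]
  | mul_X f j hf =>
    simp only [lineG, map_mul, MvPolynomial.aeval_X] at hf ⊢
    rw [Polynomial.derivative_mul, hf, MvPolynomial.pderiv_mul, map_add, map_mul, map_mul,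
      MvPolynomial.aeval_X, MvPolynomial.pderiv_X]
    by_cases h : i = j
    · subst h; simp [Pi.single_apply]
    · have h' : ¬ j = i := fun hh => h hh.symm
      simp [h, h', Pi.single_apply]

lemma line_surj {r : ℕ} (Cp : MvPolynomial (Fin r) ℤ_[p]) (x₀ : Fin r → ℤ_[p]) (i : Fin r)
    (hzero : MvPolynomial.eval x₀ Cp = 0) (v : ℤ_[p])
    (hv : ‖v‖ < ‖MvPolynomial.eval x₀ (MvPolynomial.pderiv i Cp)‖ ^ 2) :
    ∃ z : Fin r → ℤ_[p], MvPolynomial.eval z Cp = v := by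
  have hx : (fun j => if j = i then x₀ i else x₀ j) = x₀ := by
    funext j; by_cases h : j = i <;> simp [h]
  set F : Polynomial ℤ_[p] := lineG x₀ i Cp - Polynomial.C v with hF
  have hFe : F.eval (x₀ i) = -v := by
    simp [hF, Polynomial.eval_sub, lineG_eval, hx, hzero]
  have hFd : F.derivative.eval (x₀ i) = MvPolynomial.eval x₀ (MvPolynomial.pderiv i Cp) := by
    simp [hF, Polynomial.derivative_sub, lineG_deriv, lineG_eval, hx]
  have hnorm : ‖F.eval (x₀ i)‖ < ‖F.derivative.eval (x₀ i)‖ ^ 2 := by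
    rw [hFe, hFd, norm_neg]; exact hv
  obtain ⟨z, hz, -⟩ := hensels_lemma hnorm
  refine ⟨fun j => if j = i then z else x₀ j, ?_⟩
  have := lineG_eval x₀ i Cp z
  rw [hF] at hz
  simp [Polynomial.eval_sub] at hz
  rw [this] at hz
  exact sub_eq_zero.mp hz

lemma eval_int_coe {r : ℕ} (C : MvPolynomial (Fin r) ℤ) (x : Fin r → ℤ) :
    MvPolynomial.eval (fun j => ((x j : ℤ_[p]))) (MvPolynomial.map (Int.castRingHom ℤ_[p]) C)
      = ((MvPolynomial.eval x C : ℤ) : ℤ_[p]) := by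
  rw [MvPolynomial.eval_map]
  have := MvPolynomial.eval₂_comp_left (Int.castRingHom ℤ_[p]) (RingHom.id ℤ) x C
  simp only [RingHom.comp_id] at this
  rw [show (fun j => ((x j : ℤ_[p]))) = ⇑(Int.castRingHom ℤ_[p]) ∘ x from rfl, ← this]
  rfl

/-- If an integral cubic form `C` in `r` variables has a non-singular zero over `ℤ_p`,
then `R(C)` is dense in `ℚ_p`. -/
theorem stmt_17 (p : ℕ) [Fact p.Prime] (r : ℕ) (C : MvPolynomial (Fin r) ℤ)
    (hhom : C.IsHomogeneous 3) (x₀ : Fin r → ℤ_[p])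
    (hzero : MvPolynomial.eval x₀ (MvPolynomial.map (Int.castRingHom ℤ_[p]) C) = 0)
    (hns : ∃ i : Fin r,
      MvPolynomial.eval x₀ (MvPolynomial.pderiv i (MvPolynomial.map (Int.castRingHom ℤ_[p]) C)) ≠ 0) :
    Dense {q : ℚ_[p] | ∃ x y : Fin r → ℤ, MvPolynomial.eval y C ≠ 0 ∧
      q = ((MvPolynomial.eval x C : ℤ) : ℚ_[p]) / ((MvPolynomial.eval y C : ℤ) : ℚ_[p])} := by
  classical
  obtain ⟨i, hi⟩ := hns
  set Cp := MvPolynomial.map (Int.castRingHom ℤ_[p]) C with hCp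
  set c : ℤ_[p] := MvPolynomial.eval x₀ (MvPolynomial.pderiv i Cp) with hc
  have hcpos : 0 < ‖c‖ := norm_pos_iff.mpr hi
  set δ : ℝ := ‖c‖ ^ 2 with hδdef
  have hδpos : 0 < δ := by positivity
  have hδ1 : δ ≤ 1 := by
    have := c.norm_le_one
    calc ‖c‖^2 ≤ 1^2 := by gcongr
    _ = 1 := one_pow 2
  have surj : ∀ v : ℤ_[p], ‖v‖ < δ → ∃ z : Fin r → ℤ_[p], MvPolynomial.eval z Cp = v :=
    fun v hv => line_surj Cp x₀ i hzero v hv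
  rw [Metric.dense_iff]
  intro q ε hε
  -- choose k
  have hp1 : (1:ℝ) < p := by exact_mod_cast (Fact.out : p.Prime).one_lt
  have hpinv : (p:ℝ)⁻¹ < 1 := inv_lt_one_of_one_lt₀ hp1
  have hq1 : (0:ℝ) < ‖q‖ + 1 := by positivity
  obtain ⟨k, hk⟩ := exists_pow_lt_of_lt_one (div_pos hδpos hq1) hpinv
  set β : ℝ := ((p:ℝ)⁻¹) ^ k with hβdef
  have hβpos : 0 < β := by positivity
  have hkey : β * (‖q‖ + 1) < δ := by
    rw [← lt_div_iff₀ hq1]; exact hk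
  set b₀ : ℤ_[p] := (p : ℤ_[p]) ^ k with hb₀def
  have hb₀norm : ‖b₀‖ = β := by rw [hb₀def, norm_pow, PadicInt.norm_p]
  have hb₀normQ : ‖(b₀ : ℚ_[p])‖ = β := by rw [PadicInt.padic_norm_e_of_padicInt, hb₀norm]
  have hb₀lt : ‖b₀‖ < δ := by
    rw [hb₀norm]
    calc β = β * 1 := (mul_one β).symm
    _ ≤ β * (‖q‖ + 1) := by have := norm_nonneg q; nlinarith
    _ < δ := hkey
  set a₀ : ℚ_[p] := q * (b₀ : ℚ_[p]) with ha₀def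
  have ha₀norm : ‖a₀‖ < δ := by
    rw [ha₀def, norm_mul, hb₀normQ]
    calc ‖q‖ * β ≤ (‖q‖ + 1) * β := mul_le_mul_of_nonneg_right (by linarith) hβpos.le
    _ = β * (‖q‖ + 1) := mul_comm _ _
    _ < δ := hkey
  have ha₀le1 : ‖a₀‖ ≤ 1 := le_of_lt (lt_of_lt_of_le ha₀norm hδ1)
  set a' : ℤ_[p] := ⟨a₀, ha₀le1⟩ with ha'def
  have ha'coe : (a' : ℚ_[p]) = a₀ := rfl
  have ha'norm : ‖a'‖ < δ := by rw [PadicInt.norm_def]; exact ha₀norm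
  obtain ⟨ζ, hζ⟩ := surj a' ha'norm
  obtain ⟨η, hη⟩ := surj b₀ hb₀lt
  -- epsilon
  set ε' : ℝ := min β (ε * β / (‖q‖ + 1)) with hε'def
  have hε'pos : 0 < ε' := lt_min hβpos (by positivity)
  -- approximation of ζ
  obtain ⟨x, hx⟩ : ∃ x : Fin r → ℤ,
      dist (MvPolynomial.eval (fun j => ((x j : ℤ_[p]))) Cp) (MvPolynomial.eval ζ Cp) < ε' := by
    obtain ⟨δζ, hδζpos, hδζ⟩ := Metric.continuous_iff.mp (MvPolynomial.continuous_eval Cp) ζ ε' hε'pos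
    choose g hg using fun j => PadicInt.denseRange_intCast.exists_dist_lt (ζ j) hδζpos
    exact ⟨g, hδζ _ ((dist_pi_lt_iff hδζpos).mpr fun j => by rw [dist_comm]; exact hg j)⟩
  obtain ⟨y, hy⟩ : ∃ y : Fin r → ℤ,
      dist (MvPolynomial.eval (fun j => ((y j : ℤ_[p]))) Cp) (MvPolynomial.eval η Cp) < ε' := by
    obtain ⟨δη, hδηpos, hδη⟩ := Metric.continuous_iff.mp (MvPolynomial.continuous_eval Cp) η ε' hε'pos
    choose g hg using fun j => PadicInt.denseRange_intCast.exists_dist_lt (η j) hδηpos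
    exact ⟨g, hδη _ ((dist_pi_lt_iff hδηpos).mpr fun j => by rw [dist_comm]; exact hg j)⟩
  rw [eval_int_coe, hζ] at hx
  rw [eval_int_coe, hη] at hy
  set A : ℚ_[p] := ((MvPolynomial.eval x C : ℤ) : ℚ_[p]) with hAdef
  set B : ℚ_[p] := ((MvPolynomial.eval y C : ℤ) : ℚ_[p]) with hBdef
  have hA : ‖A - a₀‖ < ε' := by
    rw [dist_eq_norm] at hx
    have : ‖(((MvPolynomial.eval x C : ℤ) : ℤ_[p]) - a' : ℤ_[p])‖ = ‖A - a₀‖ := by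
      rw [PadicInt.norm_def]; push_cast [ha'coe]; rw [hAdef]
    rwa [this] at hx
  have hB : ‖B - (b₀ : ℚ_[p])‖ < ε' := by
    rw [dist_eq_norm] at hy
    have : ‖(((MvPolynomial.eval y C : ℤ) : ℤ_[p]) - b₀ : ℤ_[p])‖ = ‖B - (b₀ : ℚ_[p])‖ := by
      rw [PadicInt.norm_def]; push_cast; rw [hBdef]
    rwa [this] at hy
  have hε'β : ε' ≤ β := min_le_left _ _
  have hε'2 : ε' ≤ ε * β / (‖q‖ + 1) := min_le_right _ _
  have hBnorm : ‖B‖ = β := by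
    by_cases hd : B - (b₀ : ℚ_[p]) = 0
    · rw [sub_eq_zero.mp hd, hb₀normQ]
    · have hne : ‖B - (b₀ : ℚ_[p])‖ ≠ ‖(b₀ : ℚ_[p])‖ := by
        rw [hb₀normQ]; exact ne_of_lt (lt_of_lt_of_le hB hε'β)
      have := Padic.add_eq_max_of_ne (q := B - (b₀ : ℚ_[p])) (r := (b₀ : ℚ_[p])) hne
      rw [sub_add_cancel] at this
      rw [this, hb₀normQ]
      exact max_eq_right (le_of_lt (lt_of_lt_of_le hB hε'β))
  have hBne : B ≠ 0 := fun h => by rw [h, norm_zero] at hBnorm; exact hβpos.ne hBnorm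
  have hyC : MvPolynomial.eval y C ≠ 0 := by
    intro h; apply hBne; rw [hBdef, h]; exact Int.cast_zero
  refine ⟨A / B, Metric.mem_ball.mpr ?_, x, y, hyC, rfl⟩
  rw [dist_comm, dist_eq_norm]
  have hmul : (q - A / B) * B = q * B - A := by
    rw [sub_mul, div_mul_cancel₀ _ hBne]
  have hsplit : q - A / B = (q * B - A) / B := (eq_div_iff hBne).mpr hmul
  have hnum : ‖q * B - A‖ < ε * β := by
    have hrw : q * B - A = q * (B - (b₀ : ℚ_[p])) - (A - a₀) := by
      rw [ha₀def]; ring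
    rw [hrw]
    have h1 : ‖q * (B - (b₀ : ℚ_[p]))‖ < ε * β := by
      rw [norm_mul]
      calc ‖q‖ * ‖B - (b₀ : ℚ_[p])‖ ≤ (‖q‖ + 1) * ‖B - (b₀ : ℚ_[p])‖ :=
            mul_le_mul_of_nonneg_right (by linarith) (norm_nonneg _)
      _ < (‖q‖ + 1) * ε' := mul_lt_mul_of_pos_left hB hq1
      _ ≤ (‖q‖ + 1) * (ε * β / (‖q‖ + 1)) := mul_le_mul_of_nonneg_left hε'2 hq1.le
      _ = ε * β := mul_div_cancel₀ _ (ne_of_gt hq1)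
    have h2 : ‖A - a₀‖ < ε * β := by
      calc ‖A - a₀‖ < ε' := hA
      _ ≤ ε * β / (‖q‖ + 1) := hε'2
      _ ≤ ε * β := by
          rw [div_le_iff₀ hq1]
          exact le_mul_of_one_le_right (by positivity) (by linarith [norm_nonneg q])
    calc ‖q * (B - (b₀ : ℚ_[p])) - (A - a₀)‖
        ≤ max ‖q * (B - (b₀ : ℚ_[p]))‖ ‖-(A - a₀)‖ := by
          rw [sub_eq_add_neg]; exact Padic.nonarchimedean _ _
    _ < ε * β := by rw [norm_neg]; exact max_lt h1 h2
  rw [hsplit, norm_div, hBnorm, div_lt_iff₀ hβpos]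
  exact hnum
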